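/- For any ball configuration η ∈ {0,1}^ℕ, any capacity ℓ ∈ ℕ and any site x ∈ ℕ, the carrier with capacity ℓ equals the sum of the first ℓ seat-occupation functions: W_ℓ(η,x) = Σ_{k=1}^{ℓ} 𝒲_k(η,x). -/

import Mathlib

/-- Seat occupation functions 𝒲_k(η,x). -/
def seatW (η : ℕ → ℤ) : ℕ → ℕ → ℤ
  | 0, _ => 0
  | x + 1, k =>
      seatW η x k
        + η (x + 1) * (1 - seatW η x k) * (∏ m ∈ Finset.Ico 1 k, seatW η x m)
        - (1 - η (x + 1)) * seatW η x k * (∏ m ∈ Finset.Ico 1 k, (1 - seatW η x m))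

/-- Boarding indicator η↑_k(x). -/
def seatUp (η : ℕ → ℤ) (k x : ℕ) : ℤ :=
  η x * (1 - seatW η (x - 1) k) * (∏ m ∈ Finset.Ico 1 k, seatW η (x - 1) m)

/-- Alighting indicator η↓_k(x). -/
def seatDown (η : ℕ → ℤ) (k x : ℕ) : ℤ :=
  (1 - η x) * seatW η (x - 1) k * (∏ m ∈ Finset.Ico 1 k, (1 - seatW η (x - 1) m))

/-- Record indicator r(η,x). (Seat events at x have seat number ≤ x.) -/
def recordInd (η : ℕ → ℤ) (x : ℕ) : ℤ :=
  1 - ∑ k ∈ Finset.Icc 1 x, (seatUp η k x + seatDown η k x)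

/-- ξ_k(η,x). -/
def xiSeat (η : ℕ → ℤ) (k x : ℕ) : ℤ :=
  (x : ℤ) - ∑ y ∈ Finset.Icc 1 x, ∑ m ∈ Finset.Icc 1 k, (seatUp η m y + seatDown η m y)

/-- s_k(η,i). -/
noncomputable def sSeat (η : ℕ → ℤ) (k i : ℕ) : ℕ :=
  sInf {x : ℕ | xiSeat η k x = (i : ℤ)}

/-- k-skip map Ψ_k. -/
noncomputable def skip (η : ℕ → ℤ) (k : ℕ) : ℕ → ℤ := fun x => η (sSeat η k x)

/-- Slot decomposition ζ_k(η,i). -/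
noncomputable def zeta (η : ℕ → ℤ) (k i : ℕ) : ℤ :=
  ∑ y ∈ Finset.Icc (sSeat η k i + 1) (sSeat η k (i + 1)),
    (seatUp η k y - seatUp η (k + 1) y)

/-- Carrier with capacity ℓ. -/
def carrier (η : ℕ → ℤ) (ℓ : ℕ) : ℕ → ℤ
  | 0 => 0
  | x + 1 =>
      if η (x + 1) = 1 ∧ carrier η ℓ x < (ℓ : ℤ) then carrier η ℓ x + 1
      else if η (x + 1) = 0 ∧ 0 < carrier η ℓ x then carrier η ℓ x - 1
      else carrier η ℓ x

/-- Carrier with infinite capacity. -/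
def carrierInf (η : ℕ → ℤ) : ℕ → ℤ
  | 0 => 0
  | x + 1 => if η (x + 1) = 1 then carrierInf η x + 1 else max (carrierInf η x - 1) 0

/-- One-step BBS(ℓ) evolution. -/
def tEvol (η : ℕ → ℤ) (ℓ : ℕ) : ℕ → ℤ :=
  fun x => η x + carrier η ℓ (x - 1) - carrier η ℓ x

/-- One-step BBS(∞) evolution. -/
def tEvolInf (η : ℕ → ℤ) : ℕ → ℤ :=
  fun x => η x + carrierInf η (x - 1) - carrierInf η x

lemma prod_zero_one {s : Finset ℕ} {f : ℕ → ℤ}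
    (h : ∀ i ∈ s, f i = 0 ∨ f i = 1) :
    (∏ i ∈ s, f i) = 0 ∨ (∏ i ∈ s, f i) = 1 := by
  induction s using Finset.induction_on with
  | empty => simp
  | insert _ _ hni ih =>
    rename_i a s
    rw [Finset.prod_insert hni]
    rcases h _ (Finset.mem_insert_self _ _) with h0 | h1
    · left; simp [h0]
    · rcases ih (fun i hi => h i (Finset.mem_insert_of_mem hi)) with h0 | h1'
      · left; simp [h0]
      · right; simp [h1, h1']

lemma seatW_zero_one (η : ℕ → ℤ) (hη : ∀ x, η x = 0 ∨ η x = 1) :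
    ∀ x k, seatW η x k = 0 ∨ seatW η x k = 1 := by
  intro x
  induction x with
  | zero => intro k; left; rfl
  | succ x ih =>
    intro k
    have hP := prod_zero_one (s := Finset.Ico 1 k) (f := fun m => seatW η x m)
      (fun i _ => ih i)
    have hQ := prod_zero_one (s := Finset.Ico 1 k) (f := fun m => 1 - seatW η x m)
      (fun i _ => by rcases ih i with h | h <;> simp [h])
    rcases hη (x+1) with he | he <;> rcases ih k with hw | hw <;>
      rcases hP with hp | hp <;> rcases hQ with hq | hq <;>
      simp [seatW, he, hw, hp, hq]

lemma sum_Icc_telescope (f : ℕ → ℤ) (ℓ : ℕ) :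
    ∑ k ∈ Finset.Icc 1 ℓ, (f k - f (k+1)) = f 1 - f (ℓ+1) := by
  induction ℓ with
  | zero => simp
  | succ n ih =>
    rw [Finset.sum_Icc_succ_top (by omega), ih]; ring

lemma sum_seatW_succ (η : ℕ → ℤ) (ℓ x : ℕ) :
    ∑ k ∈ Finset.Icc 1 ℓ, seatW η (x+1) k
      = (∑ k ∈ Finset.Icc 1 ℓ, seatW η x k)
        + η (x+1) * (1 - ∏ m ∈ Finset.Ico 1 (ℓ+1), seatW η x m)
        - (1 - η (x+1)) * (1 - ∏ m ∈ Finset.Ico 1 (ℓ+1), (1 - seatW η x m)) := by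
  have key : ∑ k ∈ Finset.Icc 1 ℓ, seatW η (x+1) k
      = ∑ k ∈ Finset.Icc 1 ℓ, (seatW η x k
          + η (x+1) * ((∏ m ∈ Finset.Ico 1 k, seatW η x m)
              - ∏ m ∈ Finset.Ico 1 (k+1), seatW η x m)
          - (1 - η (x+1)) * ((∏ m ∈ Finset.Ico 1 k, (1 - seatW η x m))
              - ∏ m ∈ Finset.Ico 1 (k+1), (1 - seatW η x m))) := by
    refine Finset.sum_congr rfl fun k hk => ?_
    have hk1 : 1 ≤ k := (Finset.mem_Icc.mp hk).1
    show seatW η x k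
        + η (x + 1) * (1 - seatW η x k) * (∏ m ∈ Finset.Ico 1 k, seatW η x m)
        - (1 - η (x + 1)) * seatW η x k * (∏ m ∈ Finset.Ico 1 k, (1 - seatW η x m)) = _
    rw [Finset.prod_Ico_succ_top hk1, Finset.prod_Ico_succ_top hk1]
    ring
  rw [key, Finset.sum_sub_distrib, Finset.sum_add_distrib, ← Finset.mul_sum, ← Finset.mul_sum,
    sum_Icc_telescope (fun k => ∏ m ∈ Finset.Ico 1 k, seatW η x m) ℓ,
    sum_Icc_telescope (fun k => ∏ m ∈ Finset.Ico 1 k, (1 - seatW η x m)) ℓ]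
  simp

/-- W_ℓ(η,x) = Σ_{k=1}^ℓ 𝒲_k(η,x). -/
theorem carrier_eq_sum_seatW (η : ℕ → ℤ) (hη : ∀ x, η x = 0 ∨ η x = 1)
    (ℓ : ℕ) (hℓ : 1 ≤ ℓ) (x : ℕ) :
    carrier η ℓ x = ∑ k ∈ Finset.Icc 1 ℓ, seatW η x k := by
  induction x with
  | zero => simp [carrier, seatW]
  | succ x ih =>
    have h01 := seatW_zero_one η hη
    have hIco : Finset.Ico 1 (ℓ+1) = Finset.Icc 1 ℓ := Finset.Ico_add_one_right_eq_Icc 1 ℓ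
    set S := ∑ k ∈ Finset.Icc 1 ℓ, seatW η x k with hS
    set P := ∏ m ∈ Finset.Ico 1 (ℓ+1), seatW η x m with hPdef
    set Q := ∏ m ∈ Finset.Ico 1 (ℓ+1), (1 - seatW η x m) with hQdef
    have hP01 : P = 0 ∨ P = 1 := prod_zero_one (fun i _ => h01 x i)
    have hQ01 : Q = 0 ∨ Q = 1 :=
      prod_zero_one (fun i _ => by rcases h01 x i with h | h <;> simp [h])
    have hP1 : P = 1 → S = ℓ := by
      intro hp
      have hall : ∀ k ∈ Finset.Icc 1 ℓ, seatW η x k = 1 := by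
        intro k hk
        rcases h01 x k with h | h
        · exfalso
          have h0 : P = 0 := by
            rw [hPdef, hIco]; exact Finset.prod_eq_zero hk h
          omega
        · exact h
      rw [hS, Finset.sum_congr rfl hall]
      simp
    have hP0 : P = 0 → S < ℓ := by
      intro hp
      rw [hPdef, hIco] at hp
      obtain ⟨k0, hk0, hz⟩ := Finset.prod_eq_zero_iff.mp hp
      have hSe : S = ∑ k ∈ (Finset.Icc 1 ℓ).erase k0, seatW η x k := by
        rw [hS, ← Finset.add_sum_erase _ _ hk0, hz, zero_add]
      have hle : ∑ k ∈ (Finset.Icc 1 ℓ).erase k0, seatW η x k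
          ≤ ((Finset.Icc 1 ℓ).erase k0).card • (1 : ℤ) :=
        Finset.sum_le_card_nsmul _ _ _ (fun i _ => by rcases h01 x i with h | h <;> simp [h])
      have hcard : ((Finset.Icc 1 ℓ).erase k0).card = ℓ - 1 := by
        rw [Finset.card_erase_of_mem hk0, Nat.card_Icc]; omega
      rw [hcard, nsmul_eq_mul, mul_one] at hle
      rw [hSe]
      have hk1 : 1 ≤ ℓ := hℓ
      omega
    have hQ1 : Q = 1 → S = 0 := by
      intro hq
      have hall : ∀ k ∈ Finset.Icc 1 ℓ, seatW η x k = 0 := by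
        intro k hk
        rcases h01 x k with h | h
        · exact h
        · exfalso
          have h0 : Q = 0 := by
            rw [hQdef, hIco]
            exact Finset.prod_eq_zero hk (by rw [h]; ring)
          omega
      rw [hS, Finset.sum_congr rfl hall]
      simp
    have hQ0 : Q = 0 → 0 < S := by
      intro hq
      rw [hQdef, hIco] at hq
      obtain ⟨k0, hk0, hz⟩ := Finset.prod_eq_zero_iff.mp hq
      have hw1 : seatW η x k0 = 1 := by linarith [sub_eq_zero.mp hz]
      have : (1 : ℤ) ≤ S := by
        rw [hS]
        calc (1 : ℤ) = seatW η x k0 := hw1.symm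
        _ ≤ S := Finset.single_le_sum
            (f := fun k => seatW η x k)
            (fun i _ => by rcases h01 x i with h | h <;> simp [h]) hk0
      omega
    have hstep := sum_seatW_succ η ℓ x
    rw [← hS, ← hPdef, ← hQdef] at hstep
    rw [hstep]
    have hPS : P = 0 ∧ S < (ℓ:ℤ) ∨ P = 1 ∧ S = (ℓ:ℤ) := by
      rcases hP01 with h | h
      exacts [Or.inl ⟨h, hP0 h⟩, Or.inr ⟨h, hP1 h⟩]
    have hQS : Q = 0 ∧ 0 < S ∨ Q = 1 ∧ S = 0 := by
      rcases hQ01 with h | h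
      exacts [Or.inl ⟨h, hQ0 h⟩, Or.inr ⟨h, hQ1 h⟩]
    show (if η (x + 1) = 1 ∧ carrier η ℓ x < (ℓ : ℤ) then carrier η ℓ x + 1
      else if η (x + 1) = 0 ∧ 0 < carrier η ℓ x then carrier η ℓ x - 1
      else carrier η ℓ x) = _
    rw [ih]
    rcases hη (x+1) with he | he <;>
      rcases hPS with ⟨hp, h1⟩ | ⟨hp, h1⟩ <;> rcases hQS with ⟨hq, h2⟩ | ⟨hq, h2⟩ <;>
      rw [he, hp, hq] <;> split_ifs <;> omega
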